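/- Let p: V → U and q: V → W be linear maps between finite-dimensional K-vector spaces with p surjective and q(ker p) = 0, and let g = q∘p^{-1} be the induced map. Consider the A_3(bf) representation U ← V → W and any indecomposable decomposition h of it into intervals I[b,d]. Then the map h_W^{-1} ∘ ι_W ∘ π_U ∘ h_U (projecting to the coordinates of the summand I[1,3]^{m_{1,3}} in U and including into W) equals g. In particular, the representation-theoretic induced map coincides with q∘p^{-1}. -/
import Mathlib


/- The `A₃(bf)` quiver: vertices `1,2,3`, arrows `2 → 1` and `2 → 3`.  Interval
representations `I[b,d]` for `1 ≤ b ≤ d ≤ 3`.  The direct sum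
`⊕_{1 ≤ b ≤ d ≤ 3} I[b,d]^{m (b,d)}` has the following explicit model. -/
section Model

variable (K : Type) [Field K] (m11 m12 m13 m22 m23 m33 : ℕ)

/-- Vertex-1 space of `⊕ I[b,d]^{m_{b,d}}`: the intervals containing vertex 1 are
`[1,1], [1,2], [1,3]`. -/
abbrev DS1 := ((Fin m11 → K) × (Fin m12 → K) × (Fin m13 → K))

/-- Vertex-2 space: intervals `[1,2], [1,3], [2,2], [2,3]`. -/
abbrev DS2 := ((Fin m12 → K) × (Fin m13 → K) × (Fin m22 → K) × (Fin m23 → K))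

/-- Vertex-3 space: intervals `[1,3], [2,3], [3,3]`. -/
abbrev DS3 := ((Fin m13 → K) × (Fin m23 → K) × (Fin m33 → K))

/-- The structure map of `⊕ I[b,d]^{m_{b,d}}` along the arrow `2 → 1`:
`(x12, x13, x22, x23) ↦ (0, x12, x13)`. -/
noncomputable def pD : DS2 K m12 m13 m22 m23 →ₗ[K] DS1 K m11 m12 m13 :=
  LinearMap.prod 0 (LinearMap.prod (LinearMap.fst K _ _)
    ((LinearMap.fst K _ _).comp (LinearMap.snd K _ _)))

/-- The structure map along the arrow `2 → 3`: `(x12, x13, x22, x23) ↦ (x13, x23, 0)`. -/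
noncomputable def qD : DS2 K m12 m13 m22 m23 →ₗ[K] DS3 K m13 m23 m33 :=
  LinearMap.prod ((LinearMap.fst K _ _).comp (LinearMap.snd K _ _))
    (LinearMap.prod
      ((LinearMap.snd K _ _).comp ((LinearMap.snd K _ _).comp (LinearMap.snd K _ _)))
      0)

end Model

/-- Projection of the vertex-1 space onto the coordinates of the summand `I[1,3]^{m13}`. -/
noncomputable def pi13U (K : Type) [Field K] (m11 m12 m13 : ℕ) :
    DS1 K m11 m12 m13 →ₗ[K] (Fin m13 → K) :=
  (LinearMap.snd K _ _).comp (LinearMap.snd K _ _)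

/-- Inclusion of the `I[1,3]`-coordinates into the vertex-3 space. -/
noncomputable def iota13W (K : Type) [Field K] (m13 m23 m33 : ℕ) :
    (Fin m13 → K) →ₗ[K] DS3 K m13 m23 m33 :=
  LinearMap.prod LinearMap.id 0

/-- Let `p : V → U`, `q : V → W` with `p` surjective and `q (ker p) = 0`,
and let `g` be the induced map (`g ∘ p = q`).  For any indecomposable decomposition
`h = (hU, hV, hW)` of the `A₃(bf)` representation `U ← V → W` into intervals, the map
`hW⁻¹ ∘ ι_W ∘ π_U ∘ hU` (projecting onto the `I[1,3]`-coordinates in `U` and including them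
into `W`) equals `g`; i.e. the representation-theoretic induced map coincides with
`q ∘ p⁻¹`. -/
theorem induced_map_via_decomposition
    (K : Type) [Field K] (m11 m12 m13 m22 m23 m33 : ℕ)
    (U V W : Type) [AddCommGroup U] [Module K U] [AddCommGroup V] [Module K V]
    [AddCommGroup W] [Module K W]
    (p : V →ₗ[K] U) (q : V →ₗ[K] W)
    (hsurj : Function.Surjective p) (hcons : ∀ v, p v = 0 → q v = 0)
    (g : U →ₗ[K] W) (hg : g ∘ₗ p = q)
    (hU : U ≃ₗ[K] DS1 K m11 m12 m13) (hV : V ≃ₗ[K] DS2 K m12 m13 m22 m23)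
    (hW : W ≃ₗ[K] DS3 K m13 m23 m33)
    (hp : (pD K m11 m12 m13 m22 m23) ∘ₗ (hV : V →ₗ[K] _) = (hU : U →ₗ[K] _) ∘ₗ p)
    (hq : (qD K m12 m13 m22 m23 m33) ∘ₗ (hV : V →ₗ[K] _) = (hW : W →ₗ[K] _) ∘ₗ q) :
    (hW.symm : DS3 K m13 m23 m33 →ₗ[K] W) ∘ₗ iota13W K m13 m23 m33 ∘ₗ
      pi13U K m11 m12 m13 ∘ₗ (hU : U →ₗ[K] _) = g := by
  -- key: the m23 component space is trivial
  have key : ∀ t : Fin m23 → K, t = 0 := by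
    intro t
    set x : DS2 K m12 m13 m22 m23 := (0, 0, 0, t) with hx
    set v : V := hV.symm x with hv
    have hVv : hV v = x := hV.apply_symm_apply x
    have hpv : p v = 0 := by
      apply hU.injective
      have := congrFun (congrArg DFunLike.coe hp) v
      simp only [LinearMap.coe_comp, Function.comp_apply, LinearEquiv.coe_coe] at this
      rw [← this, hVv, map_zero]
      simp [pD, hx, Prod.ext_iff]
    have hqv : q v = 0 := hcons v hpv
    have := congrFun (congrArg DFunLike.coe hq) v
    simp only [LinearMap.coe_comp, Function.comp_apply, LinearEquiv.coe_coe] at this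
    rw [hVv, hqv, map_zero] at this
    have := congrArg (fun z : DS3 K m13 m23 m33 => z.2.1) this
    simpa [qD, hx] using this
  have hcancel : ∀ f₁ f₂ : U →ₗ[K] W, f₁ ∘ₗ p = f₂ ∘ₗ p → f₁ = f₂ := by
    intro f₁ f₂ h
    ext u
    obtain ⟨v, rfl⟩ := hsurj u
    exact congrFun (congrArg DFunLike.coe h) v
  apply hcancel
  rw [hg]
  ext v
  have hpU := congrFun (congrArg DFunLike.coe hp) v
  have hqW := congrFun (congrArg DFunLike.coe hq) v
  simp only [LinearMap.coe_comp, Function.comp_apply, LinearEquiv.coe_coe] at hpU hqW ⊢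
  rw [← hpU]
  apply hW.injective
  rw [hW.apply_symm_apply, ← hqW]
  obtain ⟨a, b, c, d⟩ := hV v
  simp [pD, qD, pi13U, iota13W, key d, Prod.ext_iff]
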